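/- Let 0 < x < 1 and τ ∈ (0,1), and let ξ ∈ (0, π/2) satisfy sin(2ξ)/(2ξ) = x·exp((2τ/(1−τ))·ξ·tan(ξ)). Then J_fwd(x, τ) = (2/(1−τ)²) · ( τ·ξ²·tan²(ξ) − (1−τ)·ξ² + (1−τ)·ξ·tan(ξ) ). -/

import Mathlib

open MeasureTheory Set

/-- `IsAC f g` expresses that `f` is absolutely continuous on `[0,1]` with `f 0 = 0`:
`g` is its (integrable) derivative, `g²` is integrable (finite energy), and
`f t = ∫₀ᵗ g(s) ds` on `[0,1]`. -/
def IsAC (f g : ℝ → ℝ) : Prop :=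
  IntervalIntegrable g volume 0 1 ∧
  IntervalIntegrable (fun t => (g t) ^ 2) volume 0 1 ∧
  ∀ t ∈ Icc (0:ℝ) 1, f t = ∫ s in (0:ℝ)..t, g s

/-- The energy `(1/2)∫₀¹ (f'(t))² dt` of a path with derivative `g`. -/
noncomputable def energy (g : ℝ → ℝ) : ℝ :=
  (1 / 2) * ∫ t in (0:ℝ)..1, (g t) ^ 2

/-- The rate function `J_BS(x)` for an Asian option with averaging starting at time `0`
in the Black-Scholes model: the infimum of `(1/2)∫₀¹ (φ'(u))² du` over absolutely
continuous `φ` with `φ(0) = 0` and `∫₀¹ exp(φ(u)) du = x`. -/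
noncomputable def JBS (x : ℝ) : ℝ :=
  sInf { E | ∃ f g : ℝ → ℝ, IsAC f g ∧ (∫ u in (0:ℝ)..1, Real.exp (f u)) = x ∧ E = energy g }

/-- The rate function `J_fwd(x, τ)` for a forward start Asian option in the
Black-Scholes model: the infimum of `(1/2)∫₀¹ (f'(t))² dt` over absolutely continuous
`f` with `f(0) = 0` and `(1/(1-τ))∫_τ¹ exp(f(t)) dt = x`. -/
noncomputable def Jfwd (x τ : ℝ) : ℝ :=
  sInf { E | ∃ f g : ℝ → ℝ, IsAC f g ∧
    (1 / (1 - τ)) * (∫ t in τ..1, Real.exp (f t)) = x ∧ E = energy g }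

noncomputable def gOpt (τ ξ : ℝ) (t : ℝ) : ℝ :=
  2*(ξ/(1-τ)) * Real.tan ((ξ/(1-τ)) * (max t τ - 1))

noncomputable def Wf (τ ξ : ℝ) (t : ℝ) : ℝ :=
  if τ ≤ t then 2*(ξ/(1-τ))^2 * (Real.cos ((ξ/(1-τ))*(t-1))^2)⁻¹ else 0

noncomputable def psiOpt (τ ξ : ℝ) (t : ℝ) : ℝ := ∫ s in (0:ℝ)..t, gOpt τ ξ s

lemma hda_tan (c t : ℝ) (h : Real.cos (c*(t-1)) ≠ 0) :
    HasDerivAt (fun s => 2*c*Real.tan (c*(s-1))) (2*c^2 * (Real.cos (c*(t-1))^2)⁻¹) t := by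
  have h1 : HasDerivAt (fun s : ℝ => c*(s-1)) c t := by
    simpa using (((hasDerivAt_id t).sub_const 1).const_mul c)
  have h2 := (Real.hasDerivAt_tan h).comp t h1
  have h3 := h2.const_mul (2*c)
  refine h3.congr_deriv ?_
  rw [one_div]; ring

lemma hda_logcos (c t : ℝ) (h : Real.cos (c*(t-1)) ≠ 0) :
    HasDerivAt (fun s => -2*Real.log (Real.cos (c*(s-1))))
      (2*c*Real.tan (c*(t-1))) t := by
  have h1 : HasDerivAt (fun s : ℝ => c*(s-1)) c t := by
    simpa using (((hasDerivAt_id t).sub_const 1).const_mul c)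
  have h2 : HasDerivAt (fun s : ℝ => Real.cos (c*(s-1))) (-Real.sin (c*(t-1)) * c) t :=
    (Real.hasDerivAt_cos _).comp t h1
  have h3 := (h2.log h)
  have h4 := h3.const_mul (-2)
  refine h4.congr_deriv ?_
  rw [Real.tan_eq_sin_div_cos]
  ring

lemma hda_tansq (c t : ℝ) (h : Real.cos (c*(t-1)) ≠ 0) :
    HasDerivAt (fun s => 4*c*Real.tan (c*(s-1)) - 4*c^2*s)
      ((2*c*Real.tan (c*(t-1)))^2) t := by
  have h1 := (hda_tan c t h).const_mul 2
  have h2 : HasDerivAt (fun s : ℝ => 4*c^2*s) (4*c^2) t := by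
    simpa using (hasDerivAt_id t).const_mul (4*c^2)
  have h3 := ((hda_tan c t h).const_mul 2).sub h2
  have hfun : (fun s => 4*c*Real.tan (c*(s-1)) - 4*c^2*s)
      = ((fun y => 2 * (2 * c * Real.tan (c * (y - 1)))) - fun s => 4 * c ^ 2 * s) := by
    ext s; simp only [Pi.sub_apply]; ring
  rw [hfun]
  refine h3.congr_deriv ?_
  · have : (Real.cos (c*(t-1))^2)⁻¹ = 1 + Real.tan (c*(t-1))^2 := by
      rw [← Real.inv_one_add_tan_sq h, inv_inv]
    rw [this]; ring

section
variable {τ ξ : ℝ}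

lemma c_pos (hτ : τ ∈ Ioo (0:ℝ) 1) (hξ : ξ ∈ Ioo (0:ℝ) (Real.pi/2)) :
    0 < ξ/(1-τ) := div_pos hξ.1 (by linarith [hτ.2])

lemma arg_mem (hτ : τ ∈ Ioo (0:ℝ) 1) (hξ : ξ ∈ Ioo (0:ℝ) (Real.pi/2)) {t : ℝ} (ht : t ∈ Icc τ 1) :
    (ξ/(1-τ)) * (t-1) ∈ Icc (-ξ) 0 := by
  have h1τ : (0:ℝ) < 1 - τ := by linarith [hτ.2]
  have hc := c_pos hτ hξ
  constructor
  · have : τ - 1 ≤ t - 1 := by linarith [ht.1]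
    have := mul_le_mul_of_nonneg_left this hc.le
    have he : (ξ/(1-τ)) * (τ-1) = -ξ := by field_simp; ring
    linarith [he ▸ this]
  · have : t - 1 ≤ 0 := by linarith [ht.2]
    exact mul_nonpos_of_nonneg_of_nonpos hc.le this

lemma cos_pos' (hτ : τ ∈ Ioo (0:ℝ) 1) (hξ : ξ ∈ Ioo (0:ℝ) (Real.pi/2)) {t : ℝ} (ht : t ∈ Icc τ 1) :
    0 < Real.cos ((ξ/(1-τ)) * (t-1)) := by
  have h := arg_mem hτ hξ ht
  apply Real.cos_pos_of_mem_Ioo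
  constructor
  · have : -(Real.pi/2) < -ξ := by linarith [hξ.2]
    linarith [h.1]
  · linarith [h.2, hξ.1, Real.pi_pos]

lemma cos_ge (hτ : τ ∈ Ioo (0:ℝ) 1) (hξ : ξ ∈ Ioo (0:ℝ) (Real.pi/2)) {t : ℝ} (ht : t ∈ Icc τ 1) :
    Real.cos ξ ≤ Real.cos ((ξ/(1-τ)) * (t-1)) := by
  have h := arg_mem hτ hξ ht
  rw [← Real.cos_abs ((ξ/(1-τ)) * (t-1))]
  apply Real.cos_le_cos_of_nonneg_of_le_pi (abs_nonneg _)
  · linarith [hξ.2, Real.pi_pos]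
  · rw [abs_le]; exact ⟨h.1, le_trans h.2 hξ.1.le⟩

lemma cosxi_pos (hξ : ξ ∈ Ioo (0:ℝ) (Real.pi/2)) : 0 < Real.cos ξ :=
  Real.cos_pos_of_mem_Ioo ⟨by linarith [hξ.1, Real.pi_pos], hξ.2⟩

lemma tanxi_pos (hξ : ξ ∈ Ioo (0:ℝ) (Real.pi/2)) : 0 < Real.tan ξ :=
  Real.tan_pos_of_pos_of_lt_pi_div_two hξ.1 hξ.2

end

section
variable {τ ξ : ℝ}

lemma gOpt_eq_on {t : ℝ} (ht : τ ≤ t) :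
    gOpt τ ξ t = 2*(ξ/(1-τ)) * Real.tan ((ξ/(1-τ)) * (t-1)) := by
  simp [gOpt, max_eq_left ht]

lemma gOpt_eq_on' (h1τ : τ < 1) {t : ℝ} (ht : t ≤ τ) :
    gOpt τ ξ t = -(2*(ξ/(1-τ)) * Real.tan ξ) := by
  simp only [gOpt, max_eq_right ht]
  have hne : (1:ℝ) - τ ≠ 0 := by linarith
  have harg : (ξ/(1-τ)) * (τ-1) = -ξ := by field_simp; ring
  rw [harg, Real.tan_neg]; ring

lemma gOpt_contOn (hτ : τ ∈ Ioo (0:ℝ) 1) (hξ : ξ ∈ Ioo (0:ℝ) (Real.pi/2)) :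
    ContinuousOn (gOpt τ ξ) (Icc 0 1) := by
  have hmax : Continuous fun t : ℝ => (ξ/(1-τ)) * (max t τ - 1) := by fun_prop
  apply (Real.continuousOn_tan.comp hmax.continuousOn ?_).const_smul (2*(ξ/(1-τ))) |>.congr
  · intro t _; simp [gOpt, smul_eq_mul]
  · intro t ht
    have hmem : max t τ ∈ Icc τ 1 := ⟨le_max_right _ _, max_le ht.2 hτ.2.le⟩
    exact (cos_pos' hτ hξ hmem).ne'

lemma gOpt_intInt (hτ : τ ∈ Ioo (0:ℝ) 1) (hξ : ξ ∈ Ioo (0:ℝ) (Real.pi/2))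
    {a b : ℝ} (ha : a ∈ Icc (0:ℝ) 1) (hb : b ∈ Icc (0:ℝ) 1) :
    IntervalIntegrable (gOpt τ ξ) volume a b :=
  ((gOpt_contOn hτ hξ).mono (uIcc_subset_Icc ha hb)).intervalIntegrable

lemma psi_left (hτ : τ ∈ Ioo (0:ℝ) 1) (hξ : ξ ∈ Ioo (0:ℝ) (Real.pi/2))
    {t : ℝ} (ht : t ∈ Icc 0 τ) :
    psiOpt τ ξ t = -(2*(ξ/(1-τ)) * Real.tan ξ) * t := by
  have : ∀ s ∈ uIcc (0:ℝ) t, gOpt τ ξ s = -(2*(ξ/(1-τ)) * Real.tan ξ) := by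
    intro s hs
    rw [uIcc_of_le ht.1] at hs
    exact gOpt_eq_on' hτ.2 (le_trans hs.2 ht.2)
  rw [psiOpt, intervalIntegral.integral_congr this, intervalIntegral.integral_const,
    smul_eq_mul]
  ring

lemma psi_right (hτ : τ ∈ Ioo (0:ℝ) 1) (hξ : ξ ∈ Ioo (0:ℝ) (Real.pi/2))
    {t : ℝ} (ht : t ∈ Icc τ 1) :
    psiOpt τ ξ t = -(2*(ξ/(1-τ)) * Real.tan ξ) * τ
      + (-2*Real.log (Real.cos ((ξ/(1-τ))*(t-1))) + 2*Real.log (Real.cos ξ)) := by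
  have hτ01 : τ ∈ Icc (0:ℝ) 1 := ⟨hτ.1.le, hτ.2.le⟩
  have ht01 : t ∈ Icc (0:ℝ) 1 := ⟨le_trans hτ.1.le ht.1, ht.2⟩
  have hsplit := intervalIntegral.integral_add_adjacent_intervals
    (gOpt_intInt hτ hξ (left_mem_Icc.2 zero_le_one) hτ01)
    (gOpt_intInt hτ hξ hτ01 ht01)
  have h1 : ∫ s in (0:ℝ)..τ, gOpt τ ξ s = -(2*(ξ/(1-τ)) * Real.tan ξ) * τ := by
    have := psi_left hτ hξ (right_mem_Icc.2 hτ.1.le)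
    simpa [psiOpt] using this
  have h2 : ∫ s in τ..t, gOpt τ ξ s
      = -2*Real.log (Real.cos ((ξ/(1-τ))*(t-1))) + 2*Real.log (Real.cos ξ) := by
    have hcong : ∀ s ∈ uIcc τ t, gOpt τ ξ s
        = 2*(ξ/(1-τ)) * Real.tan ((ξ/(1-τ)) * (s-1)) := by
      intro s hs
      rw [uIcc_of_le ht.1] at hs
      exact gOpt_eq_on hs.1
    rw [intervalIntegral.integral_congr hcong]
    have hftc := intervalIntegral.integral_eq_sub_of_hasDerivAt
      (f := fun s => -2*Real.log (Real.cos ((ξ/(1-τ))*(s-1))))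
      (f' := fun s => 2*(ξ/(1-τ)) * Real.tan ((ξ/(1-τ)) * (s-1)))
      (a := τ) (b := t) ?_ ?_
    · rw [hftc]
      have hcos : Real.cos ((ξ/(1-τ))*(τ-1)) = Real.cos ξ := by
        have hne : (1:ℝ) - τ ≠ 0 := by linarith [hτ.2]
        have harg : (ξ/(1-τ))*(τ-1) = -ξ := by field_simp; ring
        rw [harg, Real.cos_neg]
      rw [hcos]; ring
    · intro s hs
      rw [uIcc_of_le ht.1] at hs
      exact hda_logcos _ _ (cos_pos' hτ hξ ⟨hs.1, le_trans hs.2 ht.2⟩).ne'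
    · apply ContinuousOn.intervalIntegrable
      have : ContinuousOn (gOpt τ ξ) (uIcc τ t) := by
        apply (gOpt_contOn hτ hξ).mono (uIcc_subset_Icc hτ01 ht01)
      apply this.congr
      intro s hs
      rw [uIcc_of_le ht.1] at hs
      exact (gOpt_eq_on hs.1).symm
  rw [psiOpt, ← hsplit, h1, h2]

end

section
variable {τ ξ : ℝ}

lemma exp_psi (hτ : τ ∈ Ioo (0:ℝ) 1) (hξ : ξ ∈ Ioo (0:ℝ) (Real.pi/2))
    {t : ℝ} (ht : t ∈ Icc τ 1) :
    Real.exp (psiOpt τ ξ t) = Real.exp (-(2*(ξ/(1-τ))*Real.tan ξ)*τ)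
      * (Real.cos ξ)^2 * ((Real.cos ((ξ/(1-τ))*(t-1)))^2)⁻¹ := by
  have hc1 : 0 < Real.cos ((ξ/(1-τ))*(t-1)) := cos_pos' hτ hξ ht
  have hc2 : 0 < Real.cos ξ := cosxi_pos hξ
  have ha : Real.exp (-2*Real.log (Real.cos ((ξ/(1-τ))*(t-1))))
      = ((Real.cos ((ξ/(1-τ))*(t-1)))^2)⁻¹ := by
    rw [show (-2:ℝ)*Real.log (Real.cos ((ξ/(1-τ))*(t-1)))
        = Real.log (((Real.cos ((ξ/(1-τ))*(t-1)))^2)⁻¹) by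
      rw [Real.log_inv, Real.log_pow]; push_cast; ring]
    exact Real.exp_log (by positivity)
  have hb : Real.exp (2*Real.log (Real.cos ξ)) = (Real.cos ξ)^2 := by
    rw [show (2:ℝ)*Real.log (Real.cos ξ) = Real.log ((Real.cos ξ)^2) by
      rw [Real.log_pow]; push_cast; ring]
    exact Real.exp_log (by positivity)
  rw [psi_right hτ hξ ht, Real.exp_add, Real.exp_add, ha, hb]
  ring

lemma int_sec_sq (hτ : τ ∈ Ioo (0:ℝ) 1) (hξ : ξ ∈ Ioo (0:ℝ) (Real.pi/2)) :
    ∫ t in τ..1, ((Real.cos ((ξ/(1-τ))*(t-1)))^2)⁻¹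
      = Real.tan ξ / (ξ/(1-τ)) := by
  set c := ξ/(1-τ) with hc
  have hcpos : 0 < c := c_pos hτ hξ
  have hne : (1:ℝ) - τ ≠ 0 := by linarith [hτ.2]
  have hftc := intervalIntegral.integral_eq_sub_of_hasDerivAt
    (f := fun s => (1/c) * Real.tan (c*(s-1)))
    (f' := fun t => ((Real.cos (c*(t-1)))^2)⁻¹) (a := τ) (b := 1) ?_ ?_
  · rw [hftc]
    have harg : c*(τ-1) = -ξ := by rw [hc]; field_simp; ring
    simp [harg, Real.tan_neg]
    field_simp
  · intro t ht
    rw [uIcc_of_le hτ.2.le] at ht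
    have h := (hda_tan c t (cos_pos' hτ hξ ht).ne').const_mul (1/(2*c^2))
    have hfun : (fun y => 1/(2*c^2)*(2*c*Real.tan (c*(y-1))))
        = (fun s : ℝ => (1/c)*Real.tan (c*(s-1))) := by
      funext y; field_simp
    have hval : 1/(2*c^2)*(2*c^2*((Real.cos (c*(t-1)))^2)⁻¹)
        = ((Real.cos (c*(t-1)))^2)⁻¹ := by field_simp
    rw [hfun, hval] at h
    exact h
  · apply ContinuousOn.intervalIntegrable
    intro t ht
    rw [uIcc_of_le hτ.2.le] at ht
    exact (((Real.continuous_cos.comp (by fun_prop)).continuousOn.pow 2).inv₀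
      (fun s hs => by
        rw [uIcc_of_le hτ.2.le] at hs
        exact pow_ne_zero 2 (cos_pos' hτ hξ hs).ne')) t (by rwa [uIcc_of_le hτ.2.le])

end

section
variable {τ ξ : ℝ}

lemma int_gsq (hτ : τ ∈ Ioo (0:ℝ) 1) (hξ : ξ ∈ Ioo (0:ℝ) (Real.pi/2)) :
    ∫ t in (0:ℝ)..1, (gOpt τ ξ t)^2
      = (2*(ξ/(1-τ))*Real.tan ξ)^2*τ
        + (4*(ξ/(1-τ))*Real.tan ξ - 4*(ξ/(1-τ))^2*(1-τ)) := by
  set c := ξ/(1-τ) with hc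
  have hτ01 : τ ∈ Icc (0:ℝ) 1 := ⟨hτ.1.le, hτ.2.le⟩
  have h01 : (0:ℝ) ∈ Icc (0:ℝ) 1 := left_mem_Icc.2 zero_le_one
  have h11 : (1:ℝ) ∈ Icc (0:ℝ) 1 := right_mem_Icc.2 zero_le_one
  have hint : ∀ a ∈ Icc (0:ℝ) 1, ∀ b ∈ Icc (0:ℝ) 1,
      IntervalIntegrable (fun t => (gOpt τ ξ t)^2) volume a b := by
    intro a ha b hb
    exact (((gOpt_contOn hτ hξ).mono (uIcc_subset_Icc ha hb)).pow 2).intervalIntegrable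
  have hsplit := intervalIntegral.integral_add_adjacent_intervals
    (hint 0 h01 τ hτ01) (hint τ hτ01 1 h11)
  have h1 : ∫ t in (0:ℝ)..τ, (gOpt τ ξ t)^2 = (2*c*Real.tan ξ)^2*τ := by
    have hcong : ∀ s ∈ uIcc (0:ℝ) τ, (gOpt τ ξ s)^2 = (2*c*Real.tan ξ)^2 := by
      intro s hs
      rw [uIcc_of_le hτ.1.le] at hs
      rw [gOpt_eq_on' hτ.2 hs.2]; ring
    rw [intervalIntegral.integral_congr hcong, intervalIntegral.integral_const, smul_eq_mul]
    ring
  have h2 : ∫ t in τ..1, (gOpt τ ξ t)^2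
      = 4*c*Real.tan ξ - 4*c^2*(1-τ) := by
    have hcong : ∀ s ∈ uIcc τ 1, (gOpt τ ξ s)^2 = (2*c*Real.tan (c*(s-1)))^2 := by
      intro s hs
      rw [uIcc_of_le hτ.2.le] at hs
      rw [gOpt_eq_on hs.1]
    rw [intervalIntegral.integral_congr hcong]
    have hftc := intervalIntegral.integral_eq_sub_of_hasDerivAt
      (f := fun s => 4*c*Real.tan (c*(s-1)) - 4*c^2*s)
      (f' := fun s => (2*c*Real.tan (c*(s-1)))^2) (a := τ) (b := 1) ?_ ?_
    · rw [hftc]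
      have hne : (1:ℝ) - τ ≠ 0 := by linarith [hτ.2]
      have harg : c*(τ-1) = -ξ := by rw [hc]; field_simp; ring
      have harg1 : c*((1:ℝ)-1) = 0 := by ring
      rw [harg, harg1, Real.tan_neg, Real.tan_zero]
      ring
    · intro t ht
      rw [uIcc_of_le hτ.2.le] at ht
      exact hda_tansq c t (cos_pos' hτ hξ ht).ne'
    · have := hint τ hτ01 1 h11
      apply this.congr_ae
      filter_upwards [ae_restrict_mem measurableSet_uIoc] with s hs
      have hs' : s ∈ uIcc τ 1 := uIoc_subset_uIcc hs
      rw [uIcc_of_le hτ.2.le] at hs'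
      rw [gOpt_eq_on hs'.1]
  rw [← hsplit, h1, h2]

end

section
variable {τ ξ : ℝ}

lemma W_contOn (hτ : τ ∈ Ioo (0:ℝ) 1) (hξ : ξ ∈ Ioo (0:ℝ) (Real.pi/2)) :
    ContinuousOn (fun t => 2*(ξ/(1-τ))^2 * ((Real.cos ((ξ/(1-τ))*(t-1)))^2)⁻¹) (Icc τ 1) := by
  have hbase : ContinuousOn (fun t : ℝ => ((Real.cos ((ξ/(1-τ))*(t-1)))^2)⁻¹) (Icc τ 1) := by
    apply ContinuousOn.inv₀
    · exact ((Real.continuous_cos.comp (by fun_prop)).continuousOn).pow 2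
    · exact fun s hs => pow_ne_zero 2 (cos_pos' hτ hξ hs).ne'
  exact hbase.const_smul (2*(ξ/(1-τ))^2) |>.congr (fun t _ => by simp [smul_eq_mul])

lemma W_eqOn {t : ℝ} (ht : τ ≤ t) :
    Wf τ ξ t = 2*(ξ/(1-τ))^2 * ((Real.cos ((ξ/(1-τ))*(t-1)))^2)⁻¹ := if_pos ht

lemma W_intInt_right (hτ : τ ∈ Ioo (0:ℝ) 1) (hξ : ξ ∈ Ioo (0:ℝ) (Real.pi/2))
    {a b : ℝ} (ha : a ∈ Icc τ 1) (hb : b ∈ Icc τ 1) :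
    IntervalIntegrable (Wf τ ξ) volume a b := by
  apply (((W_contOn hτ hξ).mono (uIcc_subset_Icc ha hb)).intervalIntegrable).congr_ae
  filter_upwards [ae_restrict_mem measurableSet_uIoc] with s hs
  have hs' := uIcc_subset_Icc ha hb (uIoc_subset_uIcc hs)
  exact (W_eqOn hs'.1).symm

lemma int_W_right (hτ : τ ∈ Ioo (0:ℝ) 1) (hξ : ξ ∈ Ioo (0:ℝ) (Real.pi/2))
    {s : ℝ} (hs : s ∈ Icc τ 1) :
    ∫ t in s..1, Wf τ ξ t = -(2*(ξ/(1-τ)) * Real.tan ((ξ/(1-τ)) * (s-1))) := by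
  set c := ξ/(1-τ) with hc
  have hcong : ∀ u ∈ uIcc s 1, Wf τ ξ u = 2*c^2 * ((Real.cos (c*(u-1)))^2)⁻¹ := by
    intro u hu
    rw [uIcc_of_le hs.2] at hu
    exact W_eqOn (le_trans hs.1 hu.1)
  rw [intervalIntegral.integral_congr hcong]
  have hftc := intervalIntegral.integral_eq_sub_of_hasDerivAt
    (f := fun u => 2*c*Real.tan (c*(u-1)))
    (f' := fun u => 2*c^2 * ((Real.cos (c*(u-1)))^2)⁻¹) (a := s) (b := 1) ?_ ?_
  · rw [hftc]
    have harg1 : c*((1:ℝ)-1) = 0 := by ring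
    rw [harg1, Real.tan_zero]
    ring
  · intro u hu
    rw [uIcc_of_le hs.2] at hu
    exact hda_tan c u (cos_pos' hτ hξ ⟨le_trans hs.1 hu.1, hu.2⟩).ne'
  · exact ((W_contOn hτ hξ).mono
      (uIcc_subset_Icc hs ⟨le_trans hs.1 hs.2, le_refl 1⟩)).intervalIntegrable

lemma ae_ne_tau : ∀ᵐ t : ℝ, t ≠ τ := by
  refine MeasureTheory.ae_iff.2 ?_
  simpa using measure_singleton (μ := (volume : Measure ℝ)) τ

lemma W_ae_zero_left {s : ℝ} (hs : s ≤ τ) :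
    ∀ᵐ t : ℝ, t ∈ uIoc s τ → Wf τ ξ t = 0 := by
  filter_upwards [ae_ne_tau (τ := τ)] with t htne htm
  rw [uIoc_of_le hs] at htm
  have : ¬ τ ≤ t := by
    rcases lt_or_eq_of_le htm.2 with h | h
    · exact not_le.2 h
    · exact absurd h htne
  simp [Wf, this]

lemma W_intInt_left {s : ℝ} (hs : s ≤ τ) :
    IntervalIntegrable (Wf τ ξ) volume s τ := by
  apply (intervalIntegrable_const (c := (0:ℝ))).congr_ae
  filter_upwards [ae_restrict_mem measurableSet_uIoc,
    ae_restrict_of_ae (W_ae_zero_left (ξ := ξ) hs)] with t htm hW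
  exact (hW htm).symm

lemma int_W_left {s : ℝ} (hs : s ≤ τ) :
    ∫ t in s..τ, Wf τ ξ t = 0 :=
  intervalIntegral.integral_zero_ae (W_ae_zero_left hs)

lemma gOpt_eq_neg_int (hτ : τ ∈ Ioo (0:ℝ) 1) (hξ : ξ ∈ Ioo (0:ℝ) (Real.pi/2))
    {s : ℝ} (hs : s ∈ Icc 0 1) :
    gOpt τ ξ s = -∫ t in s..1, Wf τ ξ t := by
  rcases le_or_gt τ s with h | h
  · rw [int_W_right hτ hξ ⟨h, hs.2⟩, gOpt_eq_on h, neg_neg]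
  · have hsplit := intervalIntegral.integral_add_adjacent_intervals
      (W_intInt_left (ξ := ξ) h.le)
      (W_intInt_right hτ hξ (left_mem_Icc.2 hτ.2.le) (right_mem_Icc.2 hτ.2.le))
    rw [← hsplit, int_W_left h.le, int_W_right hτ hξ (left_mem_Icc.2 hτ.2.le),
      gOpt_eq_on' hτ.2 h.le]
    have hne : (1:ℝ) - τ ≠ 0 := by linarith [hτ.2]
    have harg : (ξ/(1-τ))*(τ-1) = -ξ := by field_simp; ring
    rw [harg, Real.tan_neg]
    ring

lemma W_meas : Measurable (Wf τ ξ) := by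
  have hm : Measurable fun t : ℝ => 2*(ξ/(1-τ))^2 * ((Real.cos ((ξ/(1-τ))*(t-1)))^2)⁻¹ := by
    fun_prop
  exact Measurable.ite (measurableSet_le measurable_const measurable_id) hm measurable_const

lemma W_bdd (hτ : τ ∈ Ioo (0:ℝ) 1) (hξ : ξ ∈ Ioo (0:ℝ) (Real.pi/2))
    {t : ℝ} (ht : t ∈ Ioc (0:ℝ) 1) :
    ‖Wf τ ξ t‖ ≤ 2*(ξ/(1-τ))^2 * ((Real.cos ξ)^2)⁻¹ := by
  have h3 := cosxi_pos hξ
  by_cases h : τ ≤ t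
  · rw [W_eqOn h, Real.norm_eq_abs, abs_of_nonneg (by positivity)]
    have h1 := cos_ge hτ hξ ⟨h, ht.2⟩
    have h2 := cos_pos' hτ hξ ⟨h, ht.2⟩
    gcongr
  · rw [show Wf τ ξ t = 0 from if_neg h]
    simp
    positivity

lemma W_integrableOn (hτ : τ ∈ Ioo (0:ℝ) 1) (hξ : ξ ∈ Ioo (0:ℝ) (Real.pi/2)) :
    IntegrableOn (Wf τ ξ) (Ioc (0:ℝ) 1) volume := by
  refine Measure.integrableOn_of_bounded (M := 2*(ξ/(1-τ))^2 * ((Real.cos ξ)^2)⁻¹)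
    (measure_Ioc_lt_top).ne (W_meas).aestronglyMeasurable ?_
  filter_upwards [ae_restrict_mem measurableSet_Ioc] with t ht
  exact W_bdd hτ hξ ht

lemma ibp (hτ : τ ∈ Ioo (0:ℝ) 1) (hξ : ξ ∈ Ioo (0:ℝ) (Real.pi/2))
    (hb : ℝ → ℝ) (hbi : IntervalIntegrable hb volume 0 1) :
    ∫ s in (0:ℝ)..1, gOpt τ ξ s * hb s
      = - ∫ t in τ..1, Wf τ ξ t * (∫ u in (0:ℝ)..t, hb u) := by
  have h01 : (0:ℝ) ≤ 1 := zero_le_one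
  set μ₀ := volume.restrict (Ioc (0:ℝ) 1) with hμ₀
  have hbI : Integrable hb μ₀ :=
    (intervalIntegrable_iff_integrableOn_Ioc_of_le h01).1 hbi
  have hWI : Integrable (Wf τ ξ) μ₀ := W_integrableOn hτ hξ
  set k : ℝ → ℝ → ℝ := fun s t => {q : ℝ×ℝ | q.1 < q.2}.indicator
    (fun q => hb q.1 * Wf τ ξ q.2) (s, t) with hk
  have hFi : Integrable (Function.uncurry k) (μ₀.prod μ₀) := by
    have : Function.uncurry k = {q : ℝ×ℝ | q.1 < q.2}.indicator
        (fun q => hb q.1 * Wf τ ξ q.2) := by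
      funext p; cases p; rfl
    rw [this]
    exact (hbI.mul_prod hWI).indicator (measurableSet_lt measurable_fst measurable_snd)
  have hswap := MeasureTheory.integral_integral_swap hFi
  -- evaluate LHS of hswap
  have hL : ∫ s, (∫ t, k s t ∂μ₀) ∂μ₀ = - ∫ s in (0:ℝ)..1, gOpt τ ξ s * hb s := by
    rw [hμ₀]
    rw [MeasureTheory.setIntegral_congr_fun measurableSet_Ioc
      (g := fun s => -(gOpt τ ξ s * hb s)) ?_]
    · rw [integral_neg, intervalIntegral.integral_of_le h01]
    · intro s hs
      have hinner : ∀ t : ℝ, k s t = hb s * (Ioi s).indicator (Wf τ ξ) t := by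
        intro t
        rw [hk]
        simp only [Set.indicator_apply]
        by_cases h : s < t <;> simp [h, Set.mem_Ioi, Set.mem_setOf_eq]
      simp only [hinner]
      rw [MeasureTheory.integral_const_mul, MeasureTheory.integral_indicator measurableSet_Ioi,
        Measure.restrict_restrict measurableSet_Ioi]
      have hset : Ioi s ∩ Ioc (0:ℝ) 1 = Ioc s 1 := by
        ext u
        simp only [mem_inter_iff, mem_Ioi, mem_Ioc]
        constructor
        · rintro ⟨h1, _, h3⟩; exact ⟨h1, h3⟩
        · rintro ⟨h1, h2⟩; exact ⟨h1, lt_trans hs.1 h1, h2⟩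
      rw [hset, ← intervalIntegral.integral_of_le hs.2]
      have := gOpt_eq_neg_int hτ hξ ⟨hs.1.le, hs.2⟩ (ξ := ξ)
      have h2 : (∫ t in s..1, Wf τ ξ t) = - gOpt τ ξ s := by rw [this]; ring
      rw [h2]; ring
  -- evaluate RHS of hswap
  have hHbc : ContinuousOn (fun t => ∫ u in (0:ℝ)..t, hb u) (Icc 0 1) := by
    have := intervalIntegral.continuousOn_primitive_interval'
      (a := 0) (b₁ := 0) (b₂ := 1) hbi (by rw [uIcc_of_le h01]; exact left_mem_Icc.2 h01)
    rwa [uIcc_of_le h01] at this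
  have hR : ∫ t, (∫ s, k s t ∂μ₀) ∂μ₀
      = ∫ t in τ..1, Wf τ ξ t * (∫ u in (0:ℝ)..t, hb u) := by
    have hstep1 : ∫ t, (∫ s, k s t ∂μ₀) ∂μ₀
        = ∫ t in Ioc (0:ℝ) 1, Wf τ ξ t * (∫ u in (0:ℝ)..t, hb u) := by
      rw [hμ₀]
      apply MeasureTheory.setIntegral_congr_fun measurableSet_Ioc
      intro t ht
      have hinner : ∀ s : ℝ, k s t = (Iio t).indicator hb s * Wf τ ξ t := by
        intro s
        rw [hk]
        simp only [Set.indicator_apply]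
        by_cases h : s < t <;> simp [h, Set.mem_Iio, Set.mem_setOf_eq]
      simp only [hinner]
      rw [MeasureTheory.integral_mul_const, MeasureTheory.integral_indicator measurableSet_Iio,
        Measure.restrict_restrict measurableSet_Iio]
      have hset : Iio t ∩ Ioc (0:ℝ) 1 = Ioo 0 t := by
        ext u
        simp only [mem_inter_iff, mem_Iio, mem_Ioo, mem_Ioc]
        constructor
        · rintro ⟨h1, h2, _⟩; exact ⟨h2, h1⟩
        · rintro ⟨h1, h2⟩; exact ⟨h2, h1, le_trans h2.le ht.2⟩
      rw [hset, ← MeasureTheory.integral_Ioc_eq_integral_Ioo,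
        ← intervalIntegral.integral_of_le ht.1.le]
      ring
    rw [hstep1]
    -- split Ioc 0 1 into Ioc 0 τ and Ioc τ 1
    have hun : Ioc (0:ℝ) τ ∪ Ioc τ 1 = Ioc (0:ℝ) 1 := Ioc_union_Ioc_eq_Ioc hτ.1.le hτ.2.le
    have hdisj : Disjoint (Ioc (0:ℝ) τ) (Ioc τ 1) := Ioc_disjoint_Ioc_of_le le_rfl
    have hi2 : IntegrableOn (fun t => Wf τ ξ t * (∫ u in (0:ℝ)..t, hb u)) (Ioc τ 1) volume := by
      have hcont : ContinuousOn (fun t => 2*(ξ/(1-τ))^2 * ((Real.cos ((ξ/(1-τ))*(t-1)))^2)⁻¹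
          * (∫ u in (0:ℝ)..t, hb u)) (Icc τ 1) := by
        exact (W_contOn hτ hξ).mul (hHbc.mono (Icc_subset_Icc hτ.1.le le_rfl))
      apply (hcont.integrableOn_Icc.mono_set Ioc_subset_Icc_self).congr_fun ?_ measurableSet_Ioc
      intro t ht
      dsimp only
      rw [W_eqOn ht.1.le]
    have hi1 : IntegrableOn (fun t => Wf τ ξ t * (∫ u in (0:ℝ)..t, hb u)) (Ioc 0 τ) volume := by
      apply (integrableOn_zero (s := Ioc (0:ℝ) τ)).congr
      filter_upwards [ae_restrict_mem measurableSet_Ioc,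
        ae_restrict_of_ae (ae_ne_tau (τ := τ))] with t htm htne
      have hn : ¬ τ ≤ t := fun hc => htne (le_antisymm htm.2 hc)
      simp [Wf, hn]
    have h0 : ∫ t in Ioc (0:ℝ) τ, Wf τ ξ t * (∫ u in (0:ℝ)..t, hb u) = 0 := by
      rw [MeasureTheory.setIntegral_congr_ae measurableSet_Ioc
        (g := fun _ => (0:ℝ))]
      · simp
      · filter_upwards [ae_ne_tau (τ := τ)] with t htne htm
        have : ¬ τ ≤ t := fun hc => htne (le_antisymm htm.2 hc)
        simp [Wf, this]
    rw [← hun, MeasureTheory.setIntegral_union hdisj measurableSet_Ioc hi1 hi2, h0,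
      zero_add, ← intervalIntegral.integral_of_le hτ.2.le]
  rw [hL, hR] at hswap
  linarith [hswap]

lemma energy_gOpt (hτ : τ ∈ Ioo (0:ℝ) 1) (hξ : ξ ∈ Ioo (0:ℝ) (Real.pi/2)) :
    energy (gOpt τ ξ) = (2/(1-τ)^2) *
      (τ * ξ^2 * Real.tan ξ^2 - (1-τ) * ξ^2 + (1-τ) * ξ * Real.tan ξ) := by
  have hne : (1:ℝ) - τ ≠ 0 := by linarith [hτ.2]
  rw [energy, int_gsq hτ hξ]
  field_simp
  ring

lemma isAC_gOpt (hτ : τ ∈ Ioo (0:ℝ) 1) (hξ : ξ ∈ Ioo (0:ℝ) (Real.pi/2)) :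
    IsAC (psiOpt τ ξ) (gOpt τ ξ) := by
  refine ⟨gOpt_intInt hτ hξ (left_mem_Icc.2 zero_le_one) (right_mem_Icc.2 zero_le_one),
    ?_, fun t _ => rfl⟩
  exact ((gOpt_contOn hτ hξ).mono (uIcc_subset_Icc (left_mem_Icc.2 zero_le_one)
    (right_mem_Icc.2 zero_le_one)) |>.pow 2).intervalIntegrable

lemma constraint_gOpt {x : ℝ} (hτ : τ ∈ Ioo (0:ℝ) 1) (hξ : ξ ∈ Ioo (0:ℝ) (Real.pi/2))
    (heq : Real.sin (2 * ξ) / (2 * ξ) = x * Real.exp ((2 * τ / (1 - τ)) * ξ * Real.tan ξ)) :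
    (1 / (1 - τ)) * (∫ t in τ..1, Real.exp (psiOpt τ ξ t)) = x := by
  have hne : (1:ℝ) - τ ≠ 0 := by linarith [hτ.2]
  have hcos := cosxi_pos hξ
  have hcong : ∀ t ∈ uIcc τ 1, Real.exp (psiOpt τ ξ t)
      = Real.exp (-(2*(ξ/(1-τ))*Real.tan ξ)*τ) * (Real.cos ξ)^2
        * ((Real.cos ((ξ/(1-τ))*(t-1)))^2)⁻¹ := by
    intro t ht
    rw [uIcc_of_le hτ.2.le] at ht
    exact exp_psi hτ hξ ht
  rw [intervalIntegral.integral_congr hcong]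
  have : (fun t => Real.exp (-(2*(ξ/(1-τ))*Real.tan ξ)*τ) * (Real.cos ξ)^2
        * ((Real.cos ((ξ/(1-τ))*(t-1)))^2)⁻¹)
      = fun t => (Real.exp (-(2*(ξ/(1-τ))*Real.tan ξ)*τ) * (Real.cos ξ)^2)
        * ((Real.cos ((ξ/(1-τ))*(t-1)))^2)⁻¹ := rfl
  rw [this, intervalIntegral.integral_const_mul, int_sec_sq hτ hξ]
  have hexp : Real.exp (-(2*(ξ/(1-τ))*Real.tan ξ)*τ)
      = (Real.exp ((2 * τ / (1 - τ)) * ξ * Real.tan ξ))⁻¹ := by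
    rw [← Real.exp_neg]
    congr 1
    ring
  rw [hexp]
  have hxval : x = Real.sin (2*ξ) / (2*ξ) * (Real.exp ((2 * τ / (1 - τ)) * ξ * Real.tan ξ))⁻¹ := by
    rw [heq]
    field_simp
  rw [hxval, Real.sin_two_mul, Real.tan_eq_sin_div_cos]
  have hξne : ξ ≠ 0 := hξ.1.ne'
  have hexpne : Real.exp ((2 * τ / (1 - τ)) * ξ * Real.tan ξ) ≠ 0 := Real.exp_ne_zero _
  field_simp

lemma lower_bound {x : ℝ} (hτ : τ ∈ Ioo (0:ℝ) 1) (hξ : ξ ∈ Ioo (0:ℝ) (Real.pi/2))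
    (heq : Real.sin (2 * ξ) / (2 * ξ) = x * Real.exp ((2 * τ / (1 - τ)) * ξ * Real.tan ξ))
    (f g : ℝ → ℝ) (hAC : IsAC f g)
    (hcon : (1 / (1 - τ)) * (∫ t in τ..1, Real.exp (f t)) = x) :
    energy (gOpt τ ξ) ≤ energy g := by
  obtain ⟨hgi, hgsq, hf⟩ := hAC
  have h01 : (0:ℝ) ≤ 1 := zero_le_one
  have hne : (1:ℝ) - τ ≠ 0 := by linarith [hτ.2]
  have h0m : (0:ℝ) ∈ Icc (0:ℝ) 1 := left_mem_Icc.2 h01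
  have h1m : (1:ℝ) ∈ Icc (0:ℝ) 1 := right_mem_Icc.2 h01
  have hτm : τ ∈ Icc (0:ℝ) 1 := ⟨hτ.1.le, hτ.2.le⟩
  have hGc : ContinuousOn (gOpt τ ξ) (uIcc 0 1) := by
    rw [uIcc_of_le h01]; exact gOpt_contOn hτ hξ
  have hGi : IntervalIntegrable (gOpt τ ξ) volume 0 1 := hGc.intervalIntegrable
  have hGsq : IntervalIntegrable (fun t => (gOpt τ ξ t)^2) volume 0 1 :=
    (hGc.pow 2).intervalIntegrable
  have hmul : IntervalIntegrable (fun t => gOpt τ ξ t * g t) volume 0 1 :=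
    IntervalIntegrable.continuousOn_mul hgi hGc
  -- step 1: energy g ≥ energy gOpt + ∫ gOpt (g - gOpt)
  have hsqnn : (0:ℝ) ≤ ∫ t in (0:ℝ)..1, (g t - gOpt τ ξ t)^2 :=
    intervalIntegral.integral_nonneg h01 (fun t _ => sq_nonneg _)
  have hexpand : ∫ t in (0:ℝ)..1, (g t - gOpt τ ξ t)^2
      = (∫ t in (0:ℝ)..1, (g t)^2) - 2*(∫ t in (0:ℝ)..1, gOpt τ ξ t * g t)
        + ∫ t in (0:ℝ)..1, (gOpt τ ξ t)^2 := by
    have hptw : (fun t => (g t - gOpt τ ξ t)^2)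
        = fun t => ((g t)^2 - 2*(gOpt τ ξ t * g t)) + (gOpt τ ξ t)^2 := by
      funext t; ring
    rw [hptw, intervalIntegral.integral_add (hgsq.sub (hmul.const_mul 2)) hGsq,
      intervalIntegral.integral_sub hgsq (hmul.const_mul 2),
      intervalIntegral.integral_const_mul]
  -- step 2: integration by parts
  have hIBP := ibp hτ hξ (fun t => g t - gOpt τ ξ t) (hgi.sub hGi)
  have hLHS : ∫ s in (0:ℝ)..1, gOpt τ ξ s * (g s - gOpt τ ξ s)
      = (∫ t in (0:ℝ)..1, gOpt τ ξ t * g t) - ∫ t in (0:ℝ)..1, (gOpt τ ξ t)^2 := by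
    have hptw : (fun s => gOpt τ ξ s * (g s - gOpt τ ξ s))
        = fun s => gOpt τ ξ s * g s - (gOpt τ ξ s)^2 := by
      funext s; ring
    rw [hptw, intervalIntegral.integral_sub hmul hGsq]
  -- continuity of f and psiOpt on [0,1]
  have hHgc : ContinuousOn (fun t => ∫ u in (0:ℝ)..t, g u) (Icc 0 1) := by
    have := intervalIntegral.continuousOn_primitive_interval'
      (a := 0) (b₁ := 0) (b₂ := 1) hgi (by rw [uIcc_of_le h01]; exact h0m)
    rwa [uIcc_of_le h01] at this
  have hfc : ContinuousOn f (Icc 0 1) := hHgc.congr hf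
  have hψc : ContinuousOn (psiOpt τ ξ) (Icc 0 1) := by
    have := intervalIntegral.continuousOn_primitive_interval'
      (a := 0) (b₁ := 0) (b₂ := 1) hGi (by rw [uIcc_of_le h01]; exact h0m)
    rwa [uIcc_of_le h01] at this
  -- identify the primitive of g - gOpt with f - psiOpt on [τ,1]
  have hdiff_eq : ∀ t ∈ Icc τ 1, (∫ u in (0:ℝ)..t, (g u - gOpt τ ξ u))
      = f t - psiOpt τ ξ t := by
    intro t ht
    have htm : t ∈ Icc (0:ℝ) 1 := ⟨le_trans hτ.1.le ht.1, ht.2⟩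
    have hsub : uIcc (0:ℝ) t ⊆ uIcc (0:ℝ) 1 := by
      rw [uIcc_of_le h01, uIcc_of_le htm.1]
      exact Icc_subset_Icc le_rfl htm.2
    rw [intervalIntegral.integral_sub (hgi.mono_set hsub) (hGi.mono_set hsub),
      ← hf t htm, psiOpt]
  have hRHS : ∫ t in τ..1, Wf τ ξ t * (∫ u in (0:ℝ)..t, (g u - gOpt τ ξ u))
      = ∫ t in τ..1, Wf τ ξ t * (f t - psiOpt τ ξ t) := by
    apply intervalIntegral.integral_congr
    intro t ht
    rw [uIcc_of_le hτ.2.le] at ht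
    dsimp only
    rw [hdiff_eq t ht]
  -- step 3: the multiplier inequality
  set μc : ℝ := 2*(ξ/(1-τ))^2 * ((Real.cos ξ)^2)⁻¹
    * Real.exp ((2*(ξ/(1-τ))*Real.tan ξ)*τ) with hμc
  have hμcnn : 0 ≤ μc := by
    have := cosxi_pos hξ
    positivity
  have hexp2 : Real.exp ((2*(ξ/(1-τ))*Real.tan ξ)*τ)
      * Real.exp (-(2*(ξ/(1-τ))*Real.tan ξ)*τ) = 1 := by
    rw [← Real.exp_add, show (2*(ξ/(1-τ))*Real.tan ξ)*τ
      + -(2*(ξ/(1-τ))*Real.tan ξ)*τ = 0 by ring, Real.exp_zero]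
  have hcosne : (Real.cos ξ)^2 ≠ 0 := pow_ne_zero 2 (cosxi_pos hξ).ne'
  have goal_eq : ∀ X : ℝ, (2*(ξ/(1-τ))^2 * ((Real.cos ξ)^2)⁻¹
        * Real.exp ((2*(ξ/(1-τ))*Real.tan ξ)*τ))
        * (Real.exp (-(2*(ξ/(1-τ))*Real.tan ξ)*τ) * (Real.cos ξ)^2 * X)
      = 2*(ξ/(1-τ))^2 * X := by
    intro X
    rw [show (2*(ξ/(1-τ))^2 * ((Real.cos ξ)^2)⁻¹
        * Real.exp ((2*(ξ/(1-τ))*Real.tan ξ)*τ))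
        * (Real.exp (-(2*(ξ/(1-τ))*Real.tan ξ)*τ) * (Real.cos ξ)^2 * X)
      = (Real.exp ((2*(ξ/(1-τ))*Real.tan ξ)*τ)
          * Real.exp (-(2*(ξ/(1-τ))*Real.tan ξ)*τ))
        * (((Real.cos ξ)^2)⁻¹ * (Real.cos ξ)^2)
        * (2*(ξ/(1-τ))^2 * X) from by ring,
      hexp2, inv_mul_cancel₀ hcosne]
    ring
  have hWexp : ∀ t ∈ Icc τ 1, Wf τ ξ t = μc * Real.exp (psiOpt τ ξ t) := by
    intro t ht
    rw [W_eqOn ht.1, exp_psi hτ hξ ht, hμc, goal_eq]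
  have hptle : ∀ t ∈ Icc τ 1, Wf τ ξ t * (f t - psiOpt τ ξ t)
      ≤ μc * (Real.exp (f t) - Real.exp (psiOpt τ ξ t)) := by
    intro t ht
    rw [hWexp t ht]
    have hle : Real.exp (psiOpt τ ξ t) * (f t - psiOpt τ ξ t)
        ≤ Real.exp (f t) - Real.exp (psiOpt τ ξ t) := by
      have h1 := Real.add_one_le_exp (f t - psiOpt τ ξ t)
      have h2 : Real.exp (psiOpt τ ξ t) * ((f t - psiOpt τ ξ t) + 1)
          ≤ Real.exp (psiOpt τ ξ t) * Real.exp (f t - psiOpt τ ξ t) :=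
        mul_le_mul_of_nonneg_left h1 (Real.exp_pos _).le
      rw [← Real.exp_add,
        show psiOpt τ ξ t + (f t - psiOpt τ ξ t) = f t by ring] at h2
      nlinarith [h2]
    calc μc * Real.exp (psiOpt τ ξ t) * (f t - psiOpt τ ξ t)
        = μc * (Real.exp (psiOpt τ ξ t) * (f t - psiOpt τ ξ t)) := by ring
      _ ≤ μc * (Real.exp (f t) - Real.exp (psiOpt τ ξ t)) :=
          mul_le_mul_of_nonneg_left hle hμcnn
  have hfψc : ContinuousOn (fun t => f t - psiOpt τ ξ t) (Icc τ 1) :=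
    (hfc.mono (Icc_subset_Icc hτ.1.le le_rfl)).sub (hψc.mono (Icc_subset_Icc hτ.1.le le_rfl))
  have hWfi : IntervalIntegrable (fun t => Wf τ ξ t * (f t - psiOpt τ ξ t)) volume τ 1 := by
    have hcont : ContinuousOn (fun t => (2*(ξ/(1-τ))^2
        * ((Real.cos ((ξ/(1-τ))*(t-1)))^2)⁻¹) * (f t - psiOpt τ ξ t)) (Icc τ 1) :=
      (W_contOn hτ hξ).mul hfψc
    rw [← uIcc_of_le hτ.2.le] at hcont
    apply hcont.intervalIntegrable.congr_ae
    filter_upwards [ae_restrict_mem measurableSet_uIoc] with s hs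
    have hs' : s ∈ Icc τ 1 := by rw [← uIcc_of_le hτ.2.le]; exact uIoc_subset_uIcc hs
    rw [W_eqOn hs'.1]
  have hfec : ContinuousOn (fun t => Real.exp (f t)) (Icc τ 1) :=
    Real.continuous_exp.comp_continuousOn (hfc.mono (Icc_subset_Icc hτ.1.le le_rfl))
  have hψec : ContinuousOn (fun t => Real.exp (psiOpt τ ξ t)) (Icc τ 1) :=
    Real.continuous_exp.comp_continuousOn (hψc.mono (Icc_subset_Icc hτ.1.le le_rfl))
  have hfei : IntervalIntegrable (fun t => Real.exp (f t)) volume τ 1 := by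
    rw [← uIcc_of_le hτ.2.le] at hfec
    exact hfec.intervalIntegrable
  have hψei : IntervalIntegrable (fun t => Real.exp (psiOpt τ ξ t)) volume τ 1 := by
    rw [← uIcc_of_le hτ.2.le] at hψec
    exact hψec.intervalIntegrable
  have hExpi : IntervalIntegrable
      (fun t => μc * (Real.exp (f t) - Real.exp (psiOpt τ ξ t))) volume τ 1 :=
    (hfei.sub hψei).const_mul μc
  have hint_le : ∫ t in τ..1, Wf τ ξ t * (f t - psiOpt τ ξ t)
      ≤ ∫ t in τ..1, μc * (Real.exp (f t) - Real.exp (psiOpt τ ξ t)) :=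
    intervalIntegral.integral_mono_on hτ.2.le hWfi hExpi hptle
  have hint0 : ∫ t in τ..1, μc * (Real.exp (f t) - Real.exp (psiOpt τ ξ t)) = 0 := by
    rw [intervalIntegral.integral_const_mul, intervalIntegral.integral_sub hfei hψei]
    have h1 : ∫ t in τ..1, Real.exp (f t) = (1-τ)*x := by
      field_simp at hcon
      linarith [hcon]
    have h2 : ∫ t in τ..1, Real.exp (psiOpt τ ξ t) = (1-τ)*x := by
      have h3 := constraint_gOpt hτ hξ heq
      field_simp at h3
      linarith [h3]
    rw [h1, h2]
    ring
  have hIBP' : ∫ s in (0:ℝ)..1, gOpt τ ξ s * (g s - gOpt τ ξ s)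
      = - ∫ t in τ..1, Wf τ ξ t * (f t - psiOpt τ ξ t) := by
    rw [← hRHS]
    exact hIBP
  have hSI : (∫ t in (0:ℝ)..1, gOpt τ ξ t * g t) - (∫ t in (0:ℝ)..1, (gOpt τ ξ t)^2) ≥ 0 := by
    rw [← hLHS, hIBP']
    linarith [le_trans hint_le (le_of_eq hint0)]
  rw [energy, energy]
  linarith [hsqnn, hexpand, hSI]

end


/-- For `0 < x < 1`, `τ ∈ (0,1)` and `ξ ∈ (0, π/2)` with
`sin(2ξ)/(2ξ) = x·exp((2τ/(1−τ))·ξ·tan(ξ))`, the forward rate function satisfies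
`J_fwd(x, τ) = (2/(1−τ)²)·(τξ²tan²ξ − (1−τ)ξ² + (1−τ)ξ·tan ξ)`. -/
theorem Jfwd_closed_form_put (x τ ξ : ℝ) (hx0 : 0 < x) (hx1 : x < 1)
    (hτ : τ ∈ Ioo (0:ℝ) 1) (hξ : ξ ∈ Ioo (0:ℝ) (Real.pi / 2))
    (heq : Real.sin (2 * ξ) / (2 * ξ) = x * Real.exp ((2 * τ / (1 - τ)) * ξ * Real.tan ξ)) :
    Jfwd x τ = (2 / (1 - τ) ^ 2) *
      (τ * ξ ^ 2 * Real.tan ξ ^ 2 - (1 - τ) * ξ ^ 2 + (1 - τ) * ξ * Real.tan ξ) := by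
  set J := (2 / (1 - τ) ^ 2) *
      (τ * ξ ^ 2 * Real.tan ξ ^ 2 - (1 - τ) * ξ ^ 2 + (1 - τ) * ξ * Real.tan ξ) with hJ
  have hE : energy (gOpt τ ξ) = J := energy_gOpt hτ hξ
  have hmem : J ∈ { E | ∃ f g : ℝ → ℝ, IsAC f g ∧
      (1 / (1 - τ)) * (∫ t in τ..1, Real.exp (f t)) = x ∧ E = energy g } :=
    ⟨psiOpt τ ξ, gOpt τ ξ, isAC_gOpt hτ hξ, constraint_gOpt hτ hξ heq, hE.symm⟩
  have hlb : ∀ E ∈ { E | ∃ f g : ℝ → ℝ, IsAC f g ∧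
      (1 / (1 - τ)) * (∫ t in τ..1, Real.exp (f t)) = x ∧ E = energy g }, J ≤ E := by
    rintro E ⟨f, g, hAC, hcon, rfl⟩
    rw [← hE]
    exact lower_bound hτ hξ heq f g hAC hcon
  rw [Jfwd]
  exact le_antisymm (csInf_le ⟨J, fun E hE' => hlb E hE'⟩ hmem) (le_csInf ⟨J, hmem⟩ hlb)
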